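/- If Φ and Φ̂ evolve according to the extended KP flows, then for all k ≥ 1 the Lax equations hold: ∂P/∂t_k = [(P^k)₊, P], ∂P̂/∂t_k = [(P^k)₊, P̂], ∂P/∂t̂_k = [−(P̂^k)₋, P], ∂P̂/∂t̂_k = [−(P̂^k)₋, P̂]. Moreover all the flows ∂/∂t_k, ∂/∂t̂_l (k, l ≥ 1) pairwise commute when applied to Φ and to Φ̂. -/
import Mathlib


/-!
STATEMENT 7: If Φ and Φ̂ evolve according to the extended KP flows
∂Φ/∂t_k = −(P^k)₋Φ, ∂Φ̂/∂t_k = ((P^k)₊ − δ_{k1}P̂⁻¹)Φ̂,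
∂Φ/∂t̂_k = −(P̂^k)₋Φ, ∂Φ̂/∂t̂_k = (P̂^k)₊Φ̂, then the Lax equations
∂P/∂t_k = [(P^k)₊, P], ∂P̂/∂t_k = [(P^k)₊, P̂],
∂P/∂t̂_k = [−(P̂^k)₋, P], ∂P̂/∂t̂_k = [−(P̂^k)₋, P̂] hold, and all the flows
pairwise commute when applied to Φ and to Φ̂.

The ambient algebra of pseudo-differential operators is axiomatized as a ring D
with the splitting x = x₊ + x₋ into the differential part and the negative
part, which are closed under multiplication; the invertible element ∂, the
dressing operators Φ, Φ̂ and the flows ∂/∂t_k, ∂/∂t̂_k (derivations commuting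
with the coefficientwise operations and annihilating ∂) are given as data.
-/

theorem stmt_7 {D : Type*} [Ring D]
    (pos neg : D → D)
    (hsplit : ∀ x, pos x + neg x = x)
    (hpos_add : ∀ x y, pos (x + y) = pos x + pos y)
    (hpos_idem : ∀ x, pos (pos x) = pos x)
    (hpos_mul : ∀ x y, pos (pos x * pos y) = pos x * pos y)
    (hneg_mul : ∀ x y, neg (neg x * neg y) = neg x * neg y)
    (hpos_one : pos 1 = 1)
    (del Φ Φh : Dˣ)
    (hdel_pos : pos (del : D) = (del : D))
    (T Th : ℕ → D → D)
    (hT_add : ∀ k x y, T k (x + y) = T k x + T k y)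
    (hT_mul : ∀ k x y, T k (x * y) = T k x * y + x * T k y)
    (hT_pos : ∀ k x, T k (pos x) = pos (T k x))
    (hT_del : ∀ k, T k (del : D) = 0)
    (hTh_add : ∀ k x y, Th k (x + y) = Th k x + Th k y)
    (hTh_mul : ∀ k x y, Th k (x * y) = Th k x * y + x * Th k y)
    (hTh_pos : ∀ k x, Th k (pos x) = pos (Th k x))
    (hTh_del : ∀ k, Th k (del : D) = 0) :
    let P : Dˣ := Φ * del * Φ⁻¹
    let Ph : Dˣ := Φh * del⁻¹ * Φh⁻¹
    -- the extended KP hierarchy: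
    (∀ k : ℕ, 1 ≤ k →
      T k (Φ : D) = -(neg ((P ^ k : Dˣ) : D)) * (Φ : D)) →
    (∀ k : ℕ, 1 ≤ k →
      T k (Φh : D)
        = (pos ((P ^ k : Dˣ) : D) - (if k = 1 then ((Ph⁻¹ : Dˣ) : D) else 0))
            * (Φh : D)) →
    (∀ k : ℕ, 1 ≤ k →
      Th k (Φ : D) = -(neg ((Ph ^ k : Dˣ) : D)) * (Φ : D)) →
    (∀ k : ℕ, 1 ≤ k →
      Th k (Φh : D) = pos ((Ph ^ k : Dˣ) : D) * (Φh : D)) →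
    -- the Lax equations:
    ((∀ k : ℕ, 1 ≤ k →
      T k (P : D)
        = pos ((P ^ k : Dˣ) : D) * (P : D) - (P : D) * pos ((P ^ k : Dˣ) : D)) ∧
     (∀ k : ℕ, 1 ≤ k →
      T k (Ph : D)
        = pos ((P ^ k : Dˣ) : D) * (Ph : D) - (Ph : D) * pos ((P ^ k : Dˣ) : D)) ∧
     (∀ k : ℕ, 1 ≤ k →
      Th k (P : D)
        = -(neg ((Ph ^ k : Dˣ) : D)) * (P : D) - (P : D) * -(neg ((Ph ^ k : Dˣ) : D))) ∧
     (∀ k : ℕ, 1 ≤ k →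
      Th k (Ph : D)
        = -(neg ((Ph ^ k : Dˣ) : D)) * (Ph : D) - (Ph : D) * -(neg ((Ph ^ k : Dˣ) : D))) ∧
     -- pairwise commutativity of the flows on Φ and Φ̂:
     (∀ k l : ℕ, 1 ≤ k → 1 ≤ l →
      T k (T l (Φ : D)) = T l (T k (Φ : D)) ∧
      T k (Th l (Φ : D)) = Th l (T k (Φ : D)) ∧
      Th k (Th l (Φ : D)) = Th l (Th k (Φ : D)) ∧
      T k (T l (Φh : D)) = T l (T k (Φh : D)) ∧
      T k (Th l (Φh : D)) = Th l (T k (Φh : D)) ∧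
      Th k (Th l (Φh : D)) = Th l (Th k (Φh : D)))) := by
  intro P Ph hPhi hPhih hPhi' hPhih'
  -- ## Basic pos/neg algebra
  have posdef : ∀ x : D, pos x = x - neg x := fun x => eq_sub_of_add_eq (hsplit x)
  have negdef : ∀ x : D, neg x = x - pos x := fun x => eq_sub_of_add_eq' (hsplit x)
  have hpos_zero : pos (0 : D) = 0 := by
    have h := hpos_add 0 0
    rw [add_zero] at h
    exact (left_eq_add.mp h)
  have hpos_sub : ∀ x y : D, pos (x - y) = pos x - pos y := by
    intro x y
    have hxy : x - y + y = x := by abel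
    have h := hpos_add (x - y) y
    rw [hxy] at h
    exact eq_sub_of_add_eq h.symm
  have hneg_add : ∀ x y : D, neg (x + y) = neg x + neg y := by
    intro x y
    rw [negdef (x + y), negdef x, negdef y, hpos_add]
    abel
  have hneg_sub : ∀ x y : D, neg (x - y) = neg x - neg y := by
    intro x y
    rw [negdef (x - y), negdef x, negdef y, hpos_sub]
    abel
  have hpos_negE : ∀ x : D, pos (-x) = -pos x := by
    intro x
    have h := hpos_sub 0 x
    rw [zero_sub, hpos_zero, zero_sub] at h
    exact h
  have hneg_negE : ∀ x : D, neg (-x) = -neg x := by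
    intro x
    rw [negdef (-x), negdef x, hpos_negE]
    abel
  have hneg_posx : ∀ x : D, neg (pos x) = 0 := by
    intro x; rw [negdef (pos x), hpos_idem, sub_self]
  have hpos_negx : ∀ x : D, pos (neg x) = 0 := by
    intro x; rw [negdef x, hpos_sub, hpos_idem, sub_self]
  have hneg_pp : ∀ x y : D, neg (pos x * pos y) = 0 := by
    intro x y; rw [negdef (pos x * pos y), hpos_mul, sub_self]
  have hpos_nn : ∀ x y : D, pos (neg x * neg y) = 0 := by
    intro x y; rw [posdef (neg x * neg y), hneg_mul, sub_self]
  -- ## Generic derivation lemmas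
  have d_one : ∀ (d : D → D), (∀ x y, d (x*y) = d x * y + x * d y) → d 1 = 0 := by
    intro d hm
    have h := hm 1 1
    rw [mul_one, mul_one, one_mul] at h
    exact left_eq_add.mp h
  have d_zero : ∀ (d : D → D), (∀ x y, d (x+y) = d x + d y) → d 0 = 0 := by
    intro d hm
    have h := hm 0 0
    rw [add_zero] at h
    exact left_eq_add.mp h
  have d_sub : ∀ (d : D → D), (∀ x y, d (x+y) = d x + d y) → ∀ x y, d (x - y) = d x - d y := by
    intro d hm x y
    have hxy : x - y + y = x := by abel
    have h := hm (x - y) y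
    rw [hxy] at h
    exact eq_sub_of_add_eq h.symm
  have d_negE : ∀ (d : D → D), (∀ x y, d (x+y) = d x + d y) → ∀ x, d (-x) = -(d x) := by
    intro d hm x
    have h := d_sub d hm 0 x
    rw [zero_sub, d_zero d hm, zero_sub] at h
    exact h
  have d_inv : ∀ (d : D → D), (∀ x y, d (x*y) = d x * y + x * d y) → ∀ u : Dˣ,
      d ((u⁻¹ : Dˣ) : D) = -(((u⁻¹ : Dˣ) : D) * d (u : D) * ((u⁻¹ : Dˣ) : D)) := by
    intro d hm u
    have h : d ((u : D) * ((u⁻¹ : Dˣ) : D)) = 0 := by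
      rw [Units.mul_inv]
      exact d_one d hm
    rw [hm] at h
    have h2 : (u : D) * d ((u⁻¹ : Dˣ) : D) = 0 - d (u : D) * ((u⁻¹ : Dˣ) : D) := by
      rw [← h]; abel
    have h3 : d ((u⁻¹ : Dˣ) : D) = ((u⁻¹ : Dˣ) : D) * ((u : D) * d ((u⁻¹ : Dˣ) : D)) := by
      rw [← mul_assoc, Units.inv_mul, one_mul]
    rw [h3, h2]
    noncomm_ring
  have d_pow : ∀ (d : D → D), (∀ x y, d (x*y) = d x * y + x * d y) → ∀ (u : Dˣ) (C : D),
      d (u : D) = C * (u : D) - (u : D) * C →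
      ∀ n : ℕ, d ((u^n : Dˣ) : D) = C * ((u^n : Dˣ) : D) - ((u^n : Dˣ) : D) * C := by
    intro d hm u C hC n
    induction n with
    | zero =>
        rw [pow_zero, Units.val_one, d_one d hm, mul_one, one_mul, sub_self]
    | succ n ih =>
        have hs : ((u^(n+1) : Dˣ) : D) = ((u^n : Dˣ) : D) * (u : D) := by
          rw [pow_succ, Units.val_mul]
        rw [hs, hm, ih, hC]
        noncomm_ring
  have d_conj : ∀ (d : D → D), (∀ x y, d (x*y) = d x * y + x * d y) → ∀ (u e : Dˣ) (C : D),
      d (u : D) = C * (u : D) → d (e : D) = 0 →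
      d ((u*e*u⁻¹ : Dˣ) : D) = C * ((u*e*u⁻¹ : Dˣ) : D) - ((u*e*u⁻¹ : Dˣ) : D) * C := by
    intro d hm u e C hu he
    have hval : ((u*e*u⁻¹ : Dˣ) : D) = (u : D) * (e : D) * ((u⁻¹ : Dˣ) : D) := by
      rw [Units.val_mul, Units.val_mul]
    have hinv := d_inv d hm u
    rw [hval, hm, hm, hu, he, hinv, hu]
    have hc : ((u⁻¹ : Dˣ) : D) * (C * (u : D)) * ((u⁻¹ : Dˣ) : D) = ((u⁻¹ : Dˣ) : D) * C := by
      rw [mul_assoc, mul_assoc, Units.mul_inv, mul_one]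
    rw [hc]
    noncomm_ring
  -- ## specialized derivative facts
  have hTinvdel : ∀ k, T k ((del⁻¹ : Dˣ) : D) = 0 := by
    intro k
    rw [d_inv (T k) (hT_mul k) del, hT_del k, mul_zero, zero_mul, neg_zero]
  have hThinvdel : ∀ k, Th k ((del⁻¹ : Dˣ) : D) = 0 := by
    intro k
    rw [d_inv (Th k) (hTh_mul k) del, hTh_del k, mul_zero, zero_mul, neg_zero]
  have hTP : ∀ k, 1 ≤ k → T k (P : D)
      = (-(neg ((P^k : Dˣ) : D))) * (P : D) - (P : D) * (-(neg ((P^k : Dˣ) : D))) :=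
    fun k hk => d_conj (T k) (hT_mul k) Φ del _ (hPhi k hk) (hT_del k)
  have hTPh : ∀ k, 1 ≤ k → T k (Ph : D)
      = (pos ((P^k : Dˣ) : D) - (if k = 1 then ((Ph⁻¹ : Dˣ) : D) else 0)) * (Ph : D)
        - (Ph : D) * (pos ((P^k : Dˣ) : D) - (if k = 1 then ((Ph⁻¹ : Dˣ) : D) else 0)) :=
    fun k hk => d_conj (T k) (hT_mul k) Φh del⁻¹ _ (hPhih k hk) (hTinvdel k)
  have hThP : ∀ k, 1 ≤ k → Th k (P : D)
      = (-(neg ((Ph^k : Dˣ) : D))) * (P : D) - (P : D) * (-(neg ((Ph^k : Dˣ) : D))) :=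
    fun k hk => d_conj (Th k) (hTh_mul k) Φ del _ (hPhi' k hk) (hTh_del k)
  have hThPh : ∀ k, 1 ≤ k → Th k (Ph : D)
      = pos ((Ph^k : Dˣ) : D) * (Ph : D) - (Ph : D) * pos ((Ph^k : Dˣ) : D) :=
    fun k hk => d_conj (Th k) (hTh_mul k) Φh del⁻¹ _ (hPhih' k hk) (hThinvdel k)
  -- ## commuting facts
  have hcommP : ∀ k l : ℕ, ((P^k : Dˣ) : D) * ((P^l : Dˣ) : D) = ((P^l : Dˣ) : D) * ((P^k : Dˣ) : D) := by
    intro k l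
    rw [← Units.val_mul, ← Units.val_mul, ← pow_add, ← pow_add, add_comm k l]
  have hcommPh : ∀ k l : ℕ, ((Ph^k : Dˣ) : D) * ((Ph^l : Dˣ) : D) = ((Ph^l : Dˣ) : D) * ((Ph^k : Dˣ) : D) := by
    intro k l
    rw [← Units.val_mul, ← Units.val_mul, ← pow_add, ← pow_add, add_comm k l]
  have hcommP1 : ∀ k : ℕ, ((P^k : Dˣ) : D) * (P : D) = (P : D) * ((P^k : Dˣ) : D) := by
    intro k
    have h := hcommP k 1
    rwa [pow_one] at h
  have hcommPh1 : ∀ k : ℕ, ((Ph^k : Dˣ) : D) * (Ph : D) = (Ph : D) * ((Ph^k : Dˣ) : D) := by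
    intro k
    have h := hcommPh k 1
    rwa [pow_one] at h
  have hcommPhInv : ∀ l : ℕ, ((Ph⁻¹ : Dˣ) : D) * ((Ph^l : Dˣ) : D) = ((Ph^l : Dˣ) : D) * ((Ph⁻¹ : Dˣ) : D) := by
    intro l
    rw [← Units.val_mul, ← Units.val_mul]
    exact congrArg Units.val (((Commute.refl Ph).pow_right l).inv_left).eq
  have hdcomm : ∀ k l : ℕ, (if k = 1 then ((Ph⁻¹ : Dˣ) : D) else 0) * ((Ph^l : Dˣ) : D)
      = ((Ph^l : Dˣ) : D) * (if k = 1 then ((Ph⁻¹ : Dˣ) : D) else 0) := by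
    intro k l
    split
    · exact hcommPhInv l
    · rw [zero_mul, mul_zero]
  have hdPh : ∀ k : ℕ, (if k = 1 then ((Ph⁻¹ : Dˣ) : D) else 0) * (Ph : D)
      = (Ph : D) * (if k = 1 then ((Ph⁻¹ : Dˣ) : D) else 0) := by
    intro k
    have h := hdcomm k 1
    rwa [pow_one] at h
  have hdPhInv : ∀ k : ℕ, (if k = 1 then ((Ph⁻¹ : Dˣ) : D) else 0) * ((Ph⁻¹ : Dˣ) : D)
      = ((Ph⁻¹ : Dˣ) : D) * (if k = 1 then ((Ph⁻¹ : Dˣ) : D) else 0) := by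
    intro k
    split <;> simp
  have hdd : ∀ k l : ℕ, (if k = 1 then ((Ph⁻¹ : Dˣ) : D) else 0) * (if l = 1 then ((Ph⁻¹ : Dˣ) : D) else 0)
      = (if l = 1 then ((Ph⁻¹ : Dˣ) : D) else 0) * (if k = 1 then ((Ph⁻¹ : Dˣ) : D) else 0) := by
    intro k l
    split <;> split <;> simp
  -- ## conversion lemmas
  have hconv : ∀ x y : D, x * y = y * x →
      (-(neg x)) * y - y * (-(neg x)) = pos x * y - y * pos x := by
    intro x y h
    rw [posdef x, sub_mul, mul_sub, h]
    noncomm_ring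
  have hCb : ∀ k l : ℕ,
      (pos ((P^k : Dˣ) : D) - (if k = 1 then ((Ph⁻¹ : Dˣ) : D) else 0)) * ((Ph^l : Dˣ) : D)
        - ((Ph^l : Dˣ) : D) * (pos ((P^k : Dˣ) : D) - (if k = 1 then ((Ph⁻¹ : Dˣ) : D) else 0))
      = pos ((P^k : Dˣ) : D) * ((Ph^l : Dˣ) : D) - ((Ph^l : Dˣ) : D) * pos ((P^k : Dˣ) : D) := by
    intro k l
    rw [sub_mul, mul_sub, hdcomm k l]
    noncomm_ring
  -- ## derivatives of powers
  have hTa : ∀ k l : ℕ, 1 ≤ k → T k ((P^l : Dˣ) : D)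
      = (-(neg ((P^k : Dˣ) : D))) * ((P^l : Dˣ) : D) - ((P^l : Dˣ) : D) * (-(neg ((P^k : Dˣ) : D))) :=
    fun k l hk => d_pow (T k) (hT_mul k) P _ (hTP k hk) l
  have hTb : ∀ k l : ℕ, 1 ≤ k → T k ((Ph^l : Dˣ) : D)
      = pos ((P^k : Dˣ) : D) * ((Ph^l : Dˣ) : D) - ((Ph^l : Dˣ) : D) * pos ((P^k : Dˣ) : D) := by
    intro k l hk
    rw [d_pow (T k) (hT_mul k) Ph _ (hTPh k hk) l, hCb k l]
  have hTha : ∀ k l : ℕ, 1 ≤ k → Th k ((P^l : Dˣ) : D)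
      = (-(neg ((Ph^k : Dˣ) : D))) * ((P^l : Dˣ) : D) - ((P^l : Dˣ) : D) * (-(neg ((Ph^k : Dˣ) : D))) :=
    fun k l hk => d_pow (Th k) (hTh_mul k) P _ (hThP k hk) l
  have hThb : ∀ k l : ℕ, 1 ≤ k → Th k ((Ph^l : Dˣ) : D)
      = pos ((Ph^k : Dˣ) : D) * ((Ph^l : Dˣ) : D) - ((Ph^l : Dˣ) : D) * pos ((Ph^k : Dˣ) : D) :=
    fun k l hk => d_pow (Th k) (hTh_mul k) Ph _ (hThPh k hk) l
  -- sandwich cancellation helper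
  have h1 : ∀ C : D, -(((Ph⁻¹ : Dˣ) : D) * (C * (Ph : D) - (Ph : D) * C) * ((Ph⁻¹ : Dˣ) : D))
      = C * ((Ph⁻¹ : Dˣ) : D) - ((Ph⁻¹ : Dˣ) : D) * C := by
    intro C
    have e1 : (Ph : D) * ((Ph⁻¹ : Dˣ) : D) = 1 := Units.mul_inv Ph
    have e2 : ((Ph⁻¹ : Dˣ) : D) * (Ph : D) = 1 := Units.inv_mul Ph
    calc -(((Ph⁻¹ : Dˣ) : D) * (C * (Ph : D) - (Ph : D) * C) * ((Ph⁻¹ : Dˣ) : D))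
        = -(((Ph⁻¹ : Dˣ) : D) * C * ((Ph : D) * ((Ph⁻¹ : Dˣ) : D))
            - ((Ph⁻¹ : Dˣ) : D) * (Ph : D) * (C * ((Ph⁻¹ : Dˣ) : D))) := by noncomm_ring
      _ = C * ((Ph⁻¹ : Dˣ) : D) - ((Ph⁻¹ : Dˣ) : D) * C := by
          rw [e1, e2]; noncomm_ring
  have hTd : ∀ k l : ℕ, 1 ≤ k → T k (if l = 1 then ((Ph⁻¹ : Dˣ) : D) else 0)
      = pos ((P^k : Dˣ) : D) * (if l = 1 then ((Ph⁻¹ : Dˣ) : D) else 0)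
        - (if l = 1 then ((Ph⁻¹ : Dˣ) : D) else 0) * pos ((P^k : Dˣ) : D) := by
    intro k l hk
    split
    · rw [d_inv (T k) (hT_mul k) Ph, hTPh k hk, h1]
      rw [sub_mul, mul_sub, hdPhInv k]
      abel
    · rw [d_zero (T k) (hT_add k), mul_zero, zero_mul, sub_self]
  have hThd : ∀ k l : ℕ, 1 ≤ k → Th k (if l = 1 then ((Ph⁻¹ : Dˣ) : D) else 0)
      = pos ((Ph^k : Dˣ) : D) * (if l = 1 then ((Ph⁻¹ : Dˣ) : D) else 0)
        - (if l = 1 then ((Ph⁻¹ : Dˣ) : D) else 0) * pos ((Ph^k : Dˣ) : D) := by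
    intro k l hk
    split
    · rw [d_inv (Th k) (hTh_mul k) Ph, hThPh k hk, h1]
    · rw [d_zero (Th k) (hTh_add k), mul_zero, zero_mul, sub_self]
  -- T/Th commute with neg
  have hTneg : ∀ k x, T k (neg x) = neg (T k x) := by
    intro k x
    rw [negdef x, d_sub (T k) (hT_add k), hT_pos, ← negdef]
  have hThneg : ∀ k x, Th k (neg x) = neg (Th k x) := by
    intro k x
    rw [negdef x, d_sub (Th k) (hTh_add k), hTh_pos, ← negdef]
  -- ## pure ring identities
  have pure1 : ∀ pX nX pY nY : D, (pX+nX)*(pY+nY) = (pY+nY)*(pX+nX) →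
      (nX*(pY+nY) - (pY+nY)*nX) - (nY*(pX+nX) - (pX+nX)*nY)
        = -(pX*pY - pY*pX) + (nX*nY - nY*nX) := by
    intro pX nX pY nY hc
    have key : (nX*(pY+nY) - (pY+nY)*nX) - (nY*(pX+nX) - (pX+nX)*nY)
        - (-(pX*pY - pY*pX) + (nX*nY - nY*nX))
        = (pX+nX)*(pY+nY) - (pY+nY)*(pX+nX) := by noncomm_ring
    rw [hc, sub_self] at key
    exact sub_eq_zero.mp key
  have pure2 : ∀ pX nX pY nY : D, (pX+nX)*(pY+nY) = (pY+nY)*(pX+nX) →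
      (pX*(pY+nY) - (pY+nY)*pX) - (pY*(pX+nX) - (pX+nX)*pY)
        = (pX*pY - pY*pX) - (nX*nY - nY*nX) := by
    intro pX nX pY nY hc
    have key : (pX*(pY+nY) - (pY+nY)*pX) - (pY*(pX+nX) - (pX+nX)*pY)
        - ((pX*pY - pY*pX) - (nX*nY - nY*nX))
        = (pX+nX)*(pY+nY) - (pY+nY)*(pX+nX) := by noncomm_ring
    rw [hc, sub_self] at key
    exact sub_eq_zero.mp key
  have pure3 : ∀ pX nX pY nY : D,
      (pX*(pY+nY) - (pY+nY)*pX) + (nY*(pX+nX) - (pX+nX)*nY)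
        = (pX*pY - pY*pX) + (nY*nX - nX*nY) := by
    intro pX nX pY nY
    noncomm_ring
  have split_id2 : ∀ x y : D, x*y = y*x →
      (pos x * y - y * pos x) - (pos y * x - x * pos y)
        = (pos x * pos y - pos y * pos x) - (neg x * neg y - neg y * neg x) := by
    intro x y h
    have h' : (pos x + neg x)*(pos y + neg y) = (pos y + neg y)*(pos x + neg x) := by
      rw [hsplit, hsplit]; exact h
    have h2 := pure2 (pos x) (neg x) (pos y) (neg y) h'
    rwa [hsplit x, hsplit y] at h2
  have split_id3 : ∀ x y : D,
      (pos x * y - y * pos x) + (neg y * x - x * neg y)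
        = (pos x * pos y - pos y * pos x) + (neg y * neg x - neg x * neg y) := by
    intro x y
    have h2 := pure3 (pos x) (neg x) (pos y) (neg y)
    rwa [hsplit x, hsplit y] at h2
  have neg_id2 : ∀ x y : D, x*y = y*x →
      neg (pos x * y - y * pos x) - neg (pos y * x - x * pos y)
        = neg y * neg x - neg x * neg y := by
    intro x y h
    rw [← hneg_sub, split_id2 x y h, hneg_sub, hneg_sub, hneg_sub, hneg_pp, hneg_pp,
      hneg_mul, hneg_mul]
    abel
  have pos_id2 : ∀ x y : D, x*y = y*x →
      pos (pos x * y - y * pos x) - pos (pos y * x - x * pos y)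
        = pos x * pos y - pos y * pos x := by
    intro x y h
    rw [← hpos_sub, split_id2 x y h, hpos_sub, hpos_sub, hpos_sub, hpos_mul, hpos_mul,
      hpos_nn, hpos_nn]
    abel
  have neg_id3 : ∀ x y : D,
      neg (pos x * y - y * pos x) + neg (neg y * x - x * neg y)
        = neg y * neg x - neg x * neg y := by
    intro x y
    rw [← hneg_add, split_id3, hneg_add, hneg_sub, hneg_sub, hneg_pp, hneg_pp,
      hneg_mul, hneg_mul]
    abel
  have pos_id3 : ∀ x y : D,
      pos (pos x * y - y * pos x) + pos (neg y * x - x * neg y)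
        = pos x * pos y - pos y * pos x := by
    intro x y
    rw [← hpos_add, split_id3, hpos_add, hpos_sub, hpos_sub, hpos_mul, hpos_mul,
      hpos_nn, hpos_nn]
    abel
  -- ## shape lemmas for the six commutation goals
  have shape1 : ∀ x y c : D, x*y = y*x →
      -(neg (pos x * y - y * pos x)) * c + (-(neg y)) * ((-(neg x)) * c)
        = -(neg (pos y * x - x * pos y)) * c + (-(neg x)) * ((-(neg y)) * c) := by
    intro x y c h
    have h2 := neg_id2 x y h
    rw [sub_eq_iff_eq_add] at h2
    rw [h2]
    noncomm_ring
  have shape2 : ∀ x y c : D,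
      -(neg (pos x * y - y * pos x)) * c + (-(neg y)) * ((-(neg x)) * c)
        = -(neg ((-(neg y)) * x - x * (-(neg y)))) * c + (-(neg x)) * ((-(neg y)) * c) := by
    intro x y c
    have e : (-(neg y)) * x - x * (-(neg y)) = -(neg y * x - x * neg y) := by noncomm_ring
    have hA : neg (pos x * y - y * pos x)
        = (neg y * neg x - neg x * neg y) - neg (neg y * x - x * neg y) :=
      eq_sub_of_add_eq (neg_id3 x y)
    rw [e, hneg_negE, hA]
    noncomm_ring
  have shape4 : ∀ x y dX dY c : D, x*y = y*x → dX*dY = dY*dX →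
      (pos (pos x * y - y * pos x) - (pos x * dY - dY * pos x)) * c
          + (pos y - dY) * ((pos x - dX) * c)
        = (pos (pos y * x - x * pos y) - (pos y * dX - dX * pos y)) * c
          + (pos x - dX) * ((pos y - dY) * c) := by
    intro x y dX dY c h hd
    rw [← sub_eq_zero]
    have key : (pos (pos x * y - y * pos x) - (pos x * dY - dY * pos x)) * c
          + (pos y - dY) * ((pos x - dX) * c)
        - ((pos (pos y * x - x * pos y) - (pos y * dX - dX * pos y)) * c
          + (pos x - dX) * ((pos y - dY) * c))
        = (pos (pos x * y - y * pos x) - pos (pos y * x - x * pos y)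
            - (pos x * pos y - pos y * pos x)) * c
          + (dY * dX - dX * dY) * c := by noncomm_ring
    rw [key, sub_eq_zero_of_eq (pos_id2 x y h), sub_eq_zero_of_eq hd.symm]
    simp
  have shape5 : ∀ x y dX c : D,
      pos (pos x * y - y * pos x) * c + pos y * ((pos x - dX) * c)
        = (pos ((-(neg y)) * x - x * (-(neg y))) - (pos y * dX - dX * pos y)) * c
          + (pos x - dX) * (pos y * c) := by
    intro x y dX c
    have e : (-(neg y)) * x - x * (-(neg y)) = -(neg y * x - x * neg y) := by noncomm_ring
    have hA : pos (pos x * y - y * pos x)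
        = (pos x * pos y - pos y * pos x) - pos (neg y * x - x * neg y) :=
      eq_sub_of_add_eq (pos_id3 x y)
    rw [e, hpos_negE, hA]
    noncomm_ring
  have shape6 : ∀ x y c : D, x*y = y*x →
      pos (pos x * y - y * pos x) * c + pos y * (pos x * c)
        = pos (pos y * x - x * pos y) * c + pos x * (pos y * c) := by
    intro x y c h
    have h2 := pos_id2 x y h
    rw [sub_eq_iff_eq_add] at h2
    rw [h2]
    noncomm_ring
  -- ## conclusion
  refine ⟨?_, ?_, ?_, ?_, ?_⟩
  · -- Lax for T on P
    intro k hk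
    rw [hTP k hk]
    exact hconv _ _ (hcommP1 k)
  · -- Lax for T on Ph
    intro k hk
    rw [hTPh k hk, sub_mul, mul_sub, hdPh k]
    abel
  · -- Lax for Th on P
    intro k hk
    exact hThP k hk
  · -- Lax for Th on Ph
    intro k hk
    rw [hThPh k hk, ← hconv _ _ (hcommPh1 k)]
  · -- commutation of flows
    intro k l hk hl
    refine ⟨?_, ?_, ?_, ?_, ?_, ?_⟩
    · -- T T Φ
      rw [hPhi l hl, hPhi k hk, hT_mul k, hT_mul l, hPhi k hk, hPhi l hl,
        d_negE (T k) (hT_add k), d_negE (T l) (hT_add l), hTneg k, hTneg l,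
        hTa k l hk, hTa l k hl, hconv _ _ (hcommP k l), hconv _ _ (hcommP l k)]
      exact shape1 _ _ _ (hcommP k l)
    · -- T Th Φ
      rw [hPhi' l hl, hPhi k hk, hT_mul k, hTh_mul l, hPhi k hk, hPhi' l hl,
        d_negE (T k) (hT_add k), d_negE (Th l) (hTh_add l), hTneg k, hThneg l,
        hTb k l hk, hTha l k hl]
      exact shape2 _ _ _
    · -- Th Th Φ
      rw [hPhi' l hl, hPhi' k hk, hTh_mul k, hTh_mul l, hPhi' k hk, hPhi' l hl,
        d_negE (Th k) (hTh_add k), d_negE (Th l) (hTh_add l), hThneg k, hThneg l,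
        hThb k l hk, hThb l k hl]
      exact shape1 _ _ _ (hcommPh k l)
    · -- T T Φh
      rw [hPhih l hl, hPhih k hk, hT_mul k, hT_mul l, hPhih k hk, hPhih l hl,
        d_sub (T k) (hT_add k), d_sub (T l) (hT_add l), hT_pos k, hT_pos l,
        hTa k l hk, hTa l k hl, hconv _ _ (hcommP k l), hconv _ _ (hcommP l k),
        hTd k l hk, hTd l k hl]
      exact shape4 _ _ _ _ _ (hcommP k l) (hdd k l)
    · -- T Th Φh
      rw [hPhih' l hl, hPhih k hk, hT_mul k, hTh_mul l, hPhih k hk, hPhih' l hl,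
        hT_pos k, hTb k l hk, d_sub (Th l) (hTh_add l), hTh_pos l,
        hTha l k hl, hThd l k hl]
      exact shape5 _ _ _ _
    · -- Th Th Φh
      rw [hPhih' l hl, hPhih' k hk, hTh_mul k, hTh_mul l, hPhih' k hk, hPhih' l hl,
        hTh_pos k, hTh_pos l, hThb k l hk, hThb l k hl]
      exact shape6 _ _ _ (hcommPh k l)
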